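/- arXiv:1405.1234 — 7 statements merged into one kernel-verified Lean document; each statement's English description precedes it below -/
import Mathlib

section
/- (Lemma 1, Case 1.) Assume n ≥ 1, β i > 0 for all i, α i ≥ 0 for all i, and P 0 ≤ D, and let s_max = D - P 0 (the offset of the initial assignment, at which the first job completes exactly at the due date and all jobs are on time or tardy). Then for every s > s_max one has F s_max < F s; hence no increase of the completion times beyond the initial assignment can be optimal, and an optimal offset can only be obtained by reducing the completion times or leaving them unchanged. -/
theorem stmt_1 (n : ℕ) (hn : 0 < n) (P α β : Fin n → ℝ) (D : ℝ)
    (hP : ∀ i, 0 < P i) (hβ : ∀ i, 0 < β i) (hα : ∀ i, 0 ≤ α i)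
    (hP0 : P ⟨0, hn⟩ ≤ D)
    (C : Fin n → ℝ → ℝ)
    (hC : ∀ i s, C i s = s + ∑ k ∈ Finset.Iic i, P k)
    (F : ℝ → ℝ)
    (hF : ∀ s, F s = ∑ i, (α i * max 0 (D - C i s) + β i * max 0 (C i s - D))) :
    ∀ s, D - P ⟨0, hn⟩ < s → F (D - P ⟨0, hn⟩) < F s := by
  intro s hs
  rw [hF, hF]
  apply Finset.sum_lt_sum_of_nonempty
  · exact ⟨⟨0, hn⟩, Finset.mem_univ _⟩
  intro i _
  have hsum : P ⟨0, hn⟩ ≤ ∑ k ∈ Finset.Iic i, P k := by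
    apply Finset.single_le_sum (f := P) (fun k _ => (hP k).le)
    simp [Finset.mem_Iic, Fin.le_def]
  have h1 : D ≤ C i (D - P ⟨0, hn⟩) := by rw [hC]; linarith
  have h2 : C i (D - P ⟨0, hn⟩) < C i s := by rw [hC, hC]; linarith
  have e1 : max 0 (D - C i (D - P ⟨0, hn⟩)) = 0 := max_eq_left (by linarith)
  have e2 : max 0 (D - C i s) = 0 := max_eq_left (by linarith)
  have t1 : max 0 (C i (D - P ⟨0, hn⟩) - D) = C i (D - P ⟨0, hn⟩) - D :=
    max_eq_right (by linarith)
  have t2 : max 0 (C i s - D) = C i s - D := max_eq_right (by linarith)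
  rw [e1, e2, t1, t2]
  have := hβ i
  nlinarith
end

section
/- (Lemma 1, Case 2.) Assume n ≥ 1, β i > 0 for all i, and D ≤ P 0, so that in every feasible schedule (start offset s ≥ 0) all jobs are tardy or on time. Then F 0 < F s for every s > 0; that is, the schedule in which the first job starts at time 0 and the jobs are processed consecutively without idle time is the unique optimal feasible compact schedule. -/
theorem stmt_2 (n : ℕ) (hn : 0 < n) (P α β : Fin n → ℝ) (D : ℝ)
    (hP : ∀ i, 0 < P i) (hβ : ∀ i, 0 < β i)
    (hD : D ≤ P ⟨0, hn⟩)
    (C : Fin n → ℝ → ℝ)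
    (hC : ∀ i s, C i s = s + ∑ k ∈ Finset.Iic i, P k)
    (F : ℝ → ℝ)
    (hF : ∀ s, F s = ∑ i, (α i * max 0 (D - C i s) + β i * max 0 (C i s - D))) :
    ∀ s, 0 < s → F 0 < F s := by
  intro s hs
  have hkey : ∀ (t : ℝ) (i : Fin n), 0 ≤ t → D ≤ C i t := by
    intro t i ht
    rw [hC]
    have h0 : (⟨0, hn⟩ : Fin n) ∈ Finset.Iic i := by
      simp [Fin.le_def]
    have := Finset.single_le_sum (f := P)
      (fun k _ => le_of_lt (hP k)) h0
    linarith
  have hFeq : ∀ (t : ℝ), 0 ≤ t → F t = ∑ i, β i * (C i t - D) := by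
    intro t ht
    rw [hF]
    apply Finset.sum_congr rfl
    intro i _
    have h := hkey t i ht
    rw [max_eq_left (by linarith), max_eq_right (by linarith)]
    ring
  rw [hFeq 0 le_rfl, hFeq s hs.le]
  apply Finset.sum_lt_sum_of_nonempty
  · exact Finset.univ_nonempty_iff.mpr ⟨⟨0, hn⟩⟩
  · intro i _
    have : C i 0 < C i s := by rw [hC, hC]; linarith
    have := hβ i
    nlinarith
end

section
/- (Lemma: once a left shift worsens the solution, it cannot be improved any further.) Assume α i ≥ 0 and β i ≥ 0 for all i ∈ Fin n. Let t < s' < s be three start offsets such that F s < F s' (shifting the jobs left from offset s to offset s' strictly increased the total penalty). Then F s' < F t; that is, every further left shift yields a strictly larger total penalty than F s'. -/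
theorem stmt_5 (n : ℕ) (P α β : Fin n → ℝ) (D : ℝ)
    (hP : ∀ i, 0 < P i) (hα : ∀ i, 0 ≤ α i) (hβ : ∀ i, 0 ≤ β i)
    (C : Fin n → ℝ → ℝ)
    (hC : ∀ i s, C i s = s + ∑ k ∈ Finset.Iic i, P k)
    (F : ℝ → ℝ)
    (hF : ∀ s, F s = ∑ i, (α i * max 0 (D - C i s) + β i * max 0 (C i s - D)))
    (t s' s : ℝ) (hts' : t < s') (hs's : s' < s) (hFs : F s < F s') :
    F s' < F t := by
  have hst : (0:ℝ) < s - t := by linarith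
  set lam := (s - s') / (s - t) with hlam
  set mu := (s' - t) / (s - t) with hmu
  have hlam0 : 0 < lam := div_pos (by linarith) hst
  have hmu0 : 0 < mu := div_pos (by linarith) hst
  have hsum : lam + mu = 1 := by
    rw [hlam, hmu]; field_simp; ring
  have haff : s' = lam * t + mu * s := by
    rw [hlam, hmu]; field_simp; ring
  have hmax : ∀ x y : ℝ, max 0 (lam * x + mu * y) ≤ lam * max 0 x + mu * max 0 y := by
    intro x y
    apply max_le
    · have := le_max_left (0:ℝ) x
      have := le_max_left (0:ℝ) y
      nlinarith
    · have hx := le_max_right (0:ℝ) x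
      have hy := le_max_right (0:ℝ) y
      nlinarith
  have key : F s' ≤ lam * F t + mu * F s := by
    rw [hF, hF, hF, Finset.mul_sum, Finset.mul_sum, ← Finset.sum_add_distrib]
    apply Finset.sum_le_sum
    intro i _
    have h1 : D - C i s' = lam * (D - C i t) + mu * (D - C i s) := by
      rw [hC, hC, hC]
      linear_combination (-(D - ∑ k ∈ Finset.Iic i, P k)) * hsum - haff
    have h2 : C i s' - D = lam * (C i t - D) + mu * (C i s - D) := by
      rw [hC, hC, hC]
      linear_combination (D - ∑ k ∈ Finset.Iic i, P k) * hsum + haff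
    have ha : α i * max 0 (D - C i s') ≤
        α i * (lam * max 0 (D - C i t) + mu * max 0 (D - C i s)) := by
      apply mul_le_mul_of_nonneg_left _ (hα i)
      rw [h1]; exact hmax _ _
    have hb : β i * max 0 (C i s' - D) ≤
        β i * (lam * max 0 (C i t - D) + mu * max 0 (C i s - D)) := by
      apply mul_le_mul_of_nonneg_left _ (hβ i)
      rw [h2]; exact hmax _ _
    nlinarith [ha, hb]
  have h3 : F s' < lam * F t + mu * F s' := by
    have := mul_lt_mul_of_pos_left hFs hmu0
    linarith
  have hfin : lam * F s' < lam * F t := by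
    have hl : lam = 1 - mu := by linarith
    have : lam * F s' = F s' - mu * F s' := by rw [hl]; ring
    linarith
  exact lt_of_mul_lt_mul_left hfin hlam0.le
end

section
/- (Structure of an optimal schedule; core of Theorem 1.) Assume n ≥ 1, α i ≥ 0 and β i ≥ 0 for all i ∈ Fin n, and P 0 ≤ D. Then there exists s* ∈ [0, D - P 0] minimizing F over the interval [0, D - P 0] (i.e. F s* ≤ F s for all s ∈ [0, D - P 0]) such that either s* = 0 (the first job starts at time 0) or there exists i ∈ Fin n with C i s* = D (some job completes exactly at the due date). -/
theorem stmt_6 (n : ℕ) (hn : 0 < n) (P α β : Fin n → ℝ) (D : ℝ)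
    (hP : ∀ i, 0 < P i) (hα : ∀ i, 0 ≤ α i) (hβ : ∀ i, 0 ≤ β i)
    (hP0 : P ⟨0, hn⟩ ≤ D)
    (C : Fin n → ℝ → ℝ)
    (hC : ∀ i s, C i s = s + ∑ k ∈ Finset.Iic i, P k)
    (F : ℝ → ℝ)
    (hF : ∀ s, F s = ∑ i, (α i * max 0 (D - C i s) + β i * max 0 (C i s - D))) :
    ∃ sStar ∈ Set.Icc (0 : ℝ) (D - P ⟨0, hn⟩),
      (∀ s ∈ Set.Icc (0 : ℝ) (D - P ⟨0, hn⟩), F sStar ≤ F s) ∧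
      (sStar = 0 ∨ ∃ i : Fin n, C i sStar = D) := by
  classical
  set b : ℝ := D - P ⟨0, hn⟩ with hb
  have hb0 : (0:ℝ) ≤ b := by rw [hb]; linarith
  have hIic0 : Finset.Iic (⟨0, hn⟩ : Fin n) = {⟨0, hn⟩} := by
    ext j
    simp only [Finset.mem_Iic, Finset.mem_singleton, Fin.le_def, Fin.ext_iff]
    omega
  have hCb : C ⟨0, hn⟩ b = D := by
    rw [hC, hIic0, Finset.sum_singleton, hb]; ring
  have hFc : Continuous F := by
    have hFe : F = fun s => ∑ i, (α i * max 0 (D - C i s) + β i * max 0 (C i s - D)) :=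
      funext hF
    rw [hFe]
    apply continuous_finset_sum
    intro i _
    have hCi : Continuous (fun s => C i s) := by
      have : (fun s => C i s) = fun s => s + ∑ k ∈ Finset.Iic i, P k := funext (hC i)
      rw [this]
      exact continuous_id.add continuous_const
    exact ((continuous_const.mul (continuous_const.max (continuous_const.sub hCi))).add
      (continuous_const.mul (continuous_const.max (hCi.sub continuous_const))))
  obtain ⟨t, htmem, htmin⟩ := isCompact_Icc.exists_isMinOn
    ⟨0, Set.left_mem_Icc.2 hb0⟩ hFc.continuousOn
  set M : Set ℝ := Set.Icc 0 b ∩ F ⁻¹' {F t} with hM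
  have hMne : M.Nonempty := ⟨t, htmem, rfl⟩
  have hMbdd : BddBelow M := ⟨0, fun x hx => hx.1.1⟩
  have hMclosed : IsClosed M := isClosed_Icc.inter (isClosed_singleton.preimage hFc)
  set s := sInf M with hs
  have hsM : s ∈ M := hMclosed.csInf_mem hMne hMbdd
  have hsIcc : s ∈ Set.Icc 0 b := hsM.1
  have hsF : F s = F t := hsM.2
  have hmin : ∀ x ∈ Set.Icc 0 b, F s ≤ F x := fun x hx => hsF ▸ htmin hx
  refine ⟨s, hsIcc, hmin, ?_⟩
  by_contra h
  push_neg at h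
  obtain ⟨hs0, hnoC⟩ := h
  have hspos : 0 < s := lt_of_le_of_ne hsIcc.1 (Ne.symm hs0)
  have hsb : s < b := lt_of_le_of_ne hsIcc.2 (fun he => hnoC ⟨0, hn⟩ (he ▸ hCb))
  have hne : (Finset.univ : Finset (Fin n)).Nonempty := ⟨⟨0, hn⟩, Finset.mem_univ _⟩
  set δ := Finset.univ.inf' hne (fun i => |C i s - D|) with hδ
  have hδpos : 0 < δ := by
    rw [hδ, Finset.lt_inf'_iff]
    intro i _
    exact abs_pos.2 (sub_ne_zero.2 (hnoC i))
  set ε := min (min s (b - s)) δ / 2 with hε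
  have hmpos : 0 < min (min s (b - s)) δ := lt_min (lt_min hspos (by linarith)) hδpos
  have hεpos : 0 < ε := by rw [hε]; linarith
  have hεs : ε < s := by
    have h1 : min (min s (b - s)) δ ≤ s := le_trans (min_le_left _ _) (min_le_left _ _)
    rw [hε]; linarith
  have hεb : ε < b - s := by
    have h1 : min (min s (b - s)) δ ≤ b - s := le_trans (min_le_left _ _) (min_le_right _ _)
    rw [hε]; linarith
  have hεδ : ε < δ := by
    have h1 : min (min s (b - s)) δ ≤ δ := min_le_right _ _
    rw [hε]; linarith
  have hkey : F (s - ε) + F (s + ε) = 2 * F s := by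
    rw [hF, hF, hF, ← Finset.sum_add_distrib, Finset.mul_sum]
    apply Finset.sum_congr rfl
    intro i _
    have hδi : δ ≤ |C i s - D| := Finset.inf'_le _ (Finset.mem_univ i)
    rw [hC i s] at hδi
    set c := ∑ k ∈ Finset.Iic i, P k with hc
    rw [hC i (s - ε), hC i (s + ε), hC i s]
    rcases lt_or_gt_of_ne (sub_ne_zero.2 (hnoC i)) with hlt | hgt
    · -- s + c - D < 0 : all three points early
      rw [hC i s] at hlt
      have hδ' : δ ≤ D - (s + c) := by
        rw [abs_of_neg hlt] at hδi; linarith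
      rw [max_eq_right (by linarith : (0:ℝ) ≤ D - (s - ε + c)),
          max_eq_right (by linarith : (0:ℝ) ≤ D - (s + ε + c)),
          max_eq_right (by linarith : (0:ℝ) ≤ D - (s + c)),
          max_eq_left (by linarith : (s - ε + c) - D ≤ 0),
          max_eq_left (by linarith : (s + ε + c) - D ≤ 0),
          max_eq_left (by linarith : (s + c) - D ≤ 0)]
      ring
    · -- s + c - D > 0 : all three points tardy
      rw [hC i s] at hgt
      have hδ' : δ ≤ (s + c) - D := by
        rw [abs_of_pos hgt] at hδi; linarith
      rw [max_eq_left (by linarith : D - (s - ε + c) ≤ 0),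
          max_eq_left (by linarith : D - (s + ε + c) ≤ 0),
          max_eq_left (by linarith : D - (s + c) ≤ 0),
          max_eq_right (by linarith : (0:ℝ) ≤ (s - ε + c) - D),
          max_eq_right (by linarith : (0:ℝ) ≤ (s + ε + c) - D),
          max_eq_right (by linarith : (0:ℝ) ≤ (s + c) - D)]
      ring
  have h1 : F s ≤ F (s - ε) := hmin _ ⟨by linarith, by linarith⟩
  have h2 : F s ≤ F (s + ε) := hmin _ ⟨by linarith, by linarith⟩
  have heq : F (s - ε) = F s := by linarith
  have hmem : s - ε ∈ M := ⟨⟨by linarith, by linarith⟩, by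
    simp only [Set.mem_preimage, Set.mem_singleton_iff]
    exact heq.trans hsF⟩
  have := csInf_le hMbdd hmem
  linarith
end

section
/- (A full left shift to the next breakpoint is at least as good as any partial shift; used in the proof of Theorem 1.) Let a ≤ b be real numbers and assume that for every job i ∈ Fin n either C i s ≤ D for all s ∈ [a, b] or C i s ≥ D for all s ∈ [a, b]. If c satisfies a ≤ c < b and F c < F b (a partial left shift from offset b to offset c strictly improves the total penalty), then F a ≤ F c: shifting all the way left to offset a yields a total penalty at least as small. -/
theorem stmt_8 (n : ℕ) (P α β : Fin n → ℝ) (D : ℝ)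
    (hP : ∀ i, 0 < P i)
    (C : Fin n → ℝ → ℝ)
    (hC : ∀ i s, C i s = s + ∑ k ∈ Finset.Iic i, P k)
    (F : ℝ → ℝ)
    (hF : ∀ s, F s = ∑ i, (α i * max 0 (D - C i s) + β i * max 0 (C i s - D)))
    (a b : ℝ) (hab : a ≤ b)
    (hside : ∀ i : Fin n, (∀ s ∈ Set.Icc a b, C i s ≤ D) ∨ (∀ s ∈ Set.Icc a b, C i s ≥ D))
    (c : ℝ) (hac : a ≤ c) (hcb : c < b) (himp : F c < F b) :
    F a ≤ F c := by
  classical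
  set w : Fin n → ℝ := fun i =>
    if (∀ s ∈ Set.Icc a b, C i s ≤ D) then -α i else β i with hw
  have key : ∀ s ∈ Set.Icc a b, ∀ u ∈ Set.Icc a b,
      F s - F u = (∑ i, w i) * (s - u) := by
    intro s hs u hu
    rw [hF, hF, ← Finset.sum_sub_distrib, Finset.sum_mul]
    apply Finset.sum_congr rfl
    intro i _
    have hCsu : C i s - C i u = s - u := by rw [hC, hC]; ring
    by_cases h : (∀ s ∈ Set.Icc a b, C i s ≤ D)
    · have h1 : max 0 (D - C i s) = D - C i s := max_eq_right (by linarith [h s hs])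
      have h2 : max 0 (D - C i u) = D - C i u := max_eq_right (by linarith [h u hu])
      have h3 : max 0 (C i s - D) = 0 := max_eq_left (by linarith [h s hs])
      have h4 : max 0 (C i u - D) = 0 := max_eq_left (by linarith [h u hu])
      simp only [hw, if_pos h, h1, h2, h3, h4]
      linear_combination (-α i) * hCsu
    · have h' := (hside i).resolve_left h
      have h1 : max 0 (C i s - D) = C i s - D := max_eq_right (by linarith [h' s hs])
      have h2 : max 0 (C i u - D) = C i u - D := max_eq_right (by linarith [h' u hu])
      have h3 : max 0 (D - C i s) = 0 := max_eq_left (by linarith [h' s hs])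
      have h4 : max 0 (D - C i u) = 0 := max_eq_left (by linarith [h' u hu])
      simp only [hw, if_neg h, h1, h2, h3, h4]
      linear_combination (β i) * hCsu
  have ha : a ∈ Set.Icc a b := ⟨le_refl a, hab⟩
  have hc : c ∈ Set.Icc a b := ⟨hac, hcb.le⟩
  have hb : b ∈ Set.Icc a b := ⟨hab, le_refl b⟩
  have h1 := key c hc b hb
  have h2 := key a ha c hc
  nlinarith
end

section
/- (Dynamic case: a right shift of the extended schedule cannot improve it.) Let U ≥ 0 and let s₀ ∈ [0, U] be an offset minimizing F over [0, U], i.e. F s₀ ≤ F s for all s ∈ [0, U]. Assume every new job is tardy or on time at offset s₀, i.e. C' j s₀ ≥ D for all j ∈ Fin n'. Then for every x ≥ 0 with s₀ + x ≤ U one has G s₀ ≤ G (s₀ + x): increasing all completion times of the extended job sequence cannot decrease the extended total penalty. -/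
theorem stmt_9 (n : ℕ) (P α β : Fin n → ℝ) (D : ℝ)
    (hP : ∀ i, 0 < P i)
    (C : Fin n → ℝ → ℝ)
    (hC : ∀ i s, C i s = s + ∑ k ∈ Finset.Iic i, P k)
    (F : ℝ → ℝ)
    (hF : ∀ s, F s = ∑ i, (α i * max 0 (D - C i s) + β i * max 0 (C i s - D)))
    (n' : ℕ) (Q β' : Fin n' → ℝ)
    (hQ : ∀ j, 0 < Q j) (hβ' : ∀ j, 0 ≤ β' j)
    (C' : Fin n' → ℝ → ℝ)
    (hC' : ∀ j s, C' j s = s + ∑ k, P k + ∑ l ∈ Finset.Iic j, Q l)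
    (G : ℝ → ℝ)
    (hG : ∀ s, G s = F s + ∑ j, β' j * max 0 (C' j s - D))
    (U : ℝ) (hU : 0 ≤ U)
    (s₀ : ℝ) (hs₀ : s₀ ∈ Set.Icc (0 : ℝ) U)
    (hmin : ∀ s ∈ Set.Icc (0 : ℝ) U, F s₀ ≤ F s)
    (htardy : ∀ j : Fin n', C' j s₀ ≥ D)
    (x : ℝ) (hx : 0 ≤ x) (hxU : s₀ + x ≤ U) :
    G s₀ ≤ G (s₀ + x) := by
  have hF0 : F s₀ ≤ F (s₀ + x) := hmin _ ⟨by linarith [hs₀.1], hxU⟩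
  rw [hG, hG]
  refine add_le_add hF0 (Finset.sum_le_sum fun j _ => ?_)
  refine mul_le_mul_of_nonneg_left ?_ (hβ' j)
  apply max_le_max le_rfl
  rw [hC', hC']
  linarith
end

section
/- (Lemma 4: the optimal extended schedule is obtained by reducing all completion times by a common amount γ ≥ 0.) Let U ≥ 0 and let s₀ ∈ [0, U] be an offset minimizing F over [0, U], i.e. F s₀ ≤ F s for all s ∈ [0, U]. Assume α i ≥ 0 and β i ≥ 0 for all i ∈ Fin n, and that every new job is tardy or on time at offset s₀, i.e. C' j s₀ ≥ D for all j ∈ Fin n'. Then there exists s* ∈ [0, s₀] minimizing the extended penalty G over all of [0, U]: G s* ≤ G s for every s ∈ [0, U]. Equivalently, there exists γ ≥ 0 with s* = s₀ - γ, so the optimum for the extended sequence is achieved by uniformly reducing (never increasing) the completion times of the original jobs by γ, the new jobs following compactly. -/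
theorem stmt_10 (n : ℕ) (P α β : Fin n → ℝ) (D : ℝ)
    (hP : ∀ i, 0 < P i) (hα : ∀ i, 0 ≤ α i) (hβ : ∀ i, 0 ≤ β i)
    (C : Fin n → ℝ → ℝ)
    (hC : ∀ i s, C i s = s + ∑ k ∈ Finset.Iic i, P k)
    (F : ℝ → ℝ)
    (hF : ∀ s, F s = ∑ i, (α i * max 0 (D - C i s) + β i * max 0 (C i s - D)))
    (n' : ℕ) (Q β' : Fin n' → ℝ)
    (hQ : ∀ j, 0 < Q j) (hβ' : ∀ j, 0 ≤ β' j)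
    (C' : Fin n' → ℝ → ℝ)
    (hC' : ∀ j s, C' j s = s + ∑ k, P k + ∑ l ∈ Finset.Iic j, Q l)
    (G : ℝ → ℝ)
    (hG : ∀ s, G s = F s + ∑ j, β' j * max 0 (C' j s - D))
    (U : ℝ) (hU : 0 ≤ U)
    (s₀ : ℝ) (hs₀ : s₀ ∈ Set.Icc (0 : ℝ) U)
    (hmin : ∀ s ∈ Set.Icc (0 : ℝ) U, F s₀ ≤ F s)
    (htardy : ∀ j : Fin n', C' j s₀ ≥ D) :
    ∃ sStar ∈ Set.Icc (0 : ℝ) s₀, ∀ s ∈ Set.Icc (0 : ℝ) U, G sStar ≤ G s := by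
  obtain ⟨hs₀0, hs₀U⟩ := hs₀
  have hGeq : G = fun s =>
      (∑ i, (α i * max 0 (D - (s + ∑ k ∈ Finset.Iic i, P k)) +
        β i * max 0 ((s + ∑ k ∈ Finset.Iic i, P k) - D))) +
      ∑ j, β' j * max 0 ((s + ∑ k, P k + ∑ l ∈ Finset.Iic j, Q l) - D) := by
    funext s
    rw [hG, hF]
    simp only [hC, hC']
  have hGc : Continuous G := by
    rw [hGeq]
    apply Continuous.add
    · apply continuous_finset_sum
      intro i _
      apply Continuous.add
      · exact continuous_const.mul (continuous_const.max
          (continuous_const.sub (continuous_id.add continuous_const)))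
      · exact continuous_const.mul (continuous_const.max
          ((continuous_id.add continuous_const).sub continuous_const))
    · apply continuous_finset_sum
      intro j _
      exact continuous_const.mul (continuous_const.max
        (((continuous_id.add continuous_const).add continuous_const).sub continuous_const))
  obtain ⟨sStar, hsStar, hminStar⟩ :=
    (isCompact_Icc (a := (0:ℝ)) (b := s₀)).exists_isMinOn (Set.nonempty_Icc.2 hs₀0)
      hGc.continuousOn
  refine ⟨sStar, hsStar, fun s hs => ?_⟩
  rcases le_or_gt s s₀ with h | h
  · exact hminStar ⟨hs.1, h⟩
  · have h1 : G sStar ≤ G s₀ := hminStar ⟨hs₀0, le_refl s₀⟩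
    have h2 : G s₀ ≤ G s := by
      rw [hG, hG]
      apply add_le_add (hmin s hs)
      apply Finset.sum_le_sum
      intro j _
      apply mul_le_mul_of_nonneg_left _ (hβ' j)
      apply max_le_max le_rfl
      rw [hC', hC']
      linarith [h.le]
    exact h1.trans h2
end
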